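/- arXiv:2504.00571 — 2 statements merged into one kernel-verified Lean document; each statement's English description precedes it below -/
import Mathlib

section
/- For a finite cyclic group C_n and x ∈ C_n of order d, if N([x]) denotes the set of vertices outside [x] = {generators of ⟨x⟩} adjacent to some (equivalently, every) element of [x] in the power graph of C_n, then |N([x])| = d − 2φ(d) + sum over divisors e of n/d of φ(n/e). -/
/-- The power graph of a group: distinct vertices are adjacent iff
one is a power of the other. -/
def powerGraph (G : Type*) [Group G] : SimpleGraph G where
  Adj x y := x ≠ y ∧ (x ∈ Subgroup.zpowers y ∨ y ∈ Subgroup.zpowers x)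
  symm := ⟨fun x y ⟨h1, h2⟩ => ⟨h1.symm, h2.symm⟩⟩
  loopless := ⟨fun x ⟨h, _⟩ => h rfl⟩

/-- `v` lies in a connected component containing a cycle. -/
def InCyclicComp {V : Type*} (Γ : SimpleGraph V) (v : V) : Prop :=
  ∃ w, Γ.Reachable v w ∧ ∃ c : Γ.Walk w w, c.IsCycle

/-- `S` is a cyclic vertex cutset: `Γ - S` is disconnected with at least two
components containing cycles. -/
def IsCyclicCutset {V : Type*} (Γ : SimpleGraph V) (S : Set V) : Prop :=
  ∃ u v : ↥(Sᶜ), ¬ (Γ.induce Sᶜ).Reachable u v ∧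
    InCyclicComp (Γ.induce Sᶜ) u ∧ InCyclicComp (Γ.induce Sᶜ) v

/-- A graph is cyclically separable if it has a cyclic vertex cutset. -/
def CyclicallySeparable {V : Type*} (Γ : SimpleGraph V) : Prop :=
  ∃ S : Set V, IsCyclicCutset Γ S

/-- Vertex connectivity: the least number of vertices whose deletion
disconnects the graph or reduces it to at most one vertex. -/
noncomputable def vertexConn {V : Type*} (Γ : SimpleGraph V) : ℕ :=
  sInf {k | ∃ S : Set V, S.ncard = k ∧
    (¬ (Γ.induce Sᶜ).Connected ∨ Sᶜ.Subsingleton)}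

/-- Cyclic vertex connectivity: the least cardinality of a cyclic vertex
cutset, `∞` if there is none. -/
noncomputable def cyclicVertexConn {V : Type*} (Γ : SimpleGraph V) : ℕ∞ :=
  sInf {k : ℕ∞ | ∃ S : Set V, IsCyclicCutset Γ S ∧ k = (S.ncard : ℕ∞)}

/-- `genClass x` is `[x]`, the set of generators of `⟨x⟩`. -/
def genClass {G : Type*} [Group G] (x : G) : Set G :=
  {y | Subgroup.zpowers y = Subgroup.zpowers x}

/-- Neighbourhood of a set of vertices. -/
def setNbhd {V : Type*} (Γ : SimpleGraph V) (A : Set V) : Set V :=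
  {v | v ∉ A ∧ ∃ a ∈ A, Γ.Adj v a}

section
open Finset Subgroup

lemma mem_zpowers_iff_orderOf_dvd' {G : Type*} [Group G] [Fintype G] [IsCyclic G]
    {a b : G} : a ∈ Subgroup.zpowers b ↔ orderOf a ∣ orderOf b := by
  classical
  constructor
  · exact orderOf_dvd_of_mem_zpowers
  · intro h
    have hb : 0 < orderOf b := orderOf_pos b
    set S : Finset G := univ.filter (fun x => x ^ orderOf b = 1) with hS
    have hsub : (Subgroup.zpowers b : Set G).toFinset ⊆ S := by
      intro y hy
      simp only [Set.mem_toFinset, SetLike.mem_coe] at hy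
      simp only [hS, mem_filter, mem_univ, true_and]
      exact orderOf_dvd_iff_pow_eq_one.mp (orderOf_dvd_of_mem_zpowers hy)
    have hcard : S.card ≤ (Subgroup.zpowers b : Set G).toFinset.card := by
      have h1 : S.card ≤ orderOf b := IsCyclic.card_pow_eq_one_le hb
      have h2 : (Subgroup.zpowers b : Set G).toFinset.card = orderOf b := by
        rw [Set.toFinset_card, ← Nat.card_zpowers b, Nat.card_eq_fintype_card]; rfl
      omega
    have heq := Finset.eq_of_subset_of_card_le hsub hcard
    have ha : a ∈ S := by
      simp only [hS, mem_filter, mem_univ, true_and]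
      exact orderOf_dvd_iff_pow_eq_one.mp h
    rw [← heq] at ha
    simpa using ha

lemma zpowers_eq_iff_orderOf_eq' {G : Type*} [Group G] [Fintype G] [IsCyclic G]
    {a b : G} : Subgroup.zpowers a = Subgroup.zpowers b ↔ orderOf a = orderOf b := by
  constructor
  · intro h
    exact Nat.dvd_antisymm
      (mem_zpowers_iff_orderOf_dvd'.mp (h ▸ mem_zpowers a))
      (mem_zpowers_iff_orderOf_dvd'.mp (h ▸ mem_zpowers b))
  · intro h
    exact le_antisymm (zpowers_le.mpr (mem_zpowers_iff_orderOf_dvd'.mpr h.dvd))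
      (zpowers_le.mpr (mem_zpowers_iff_orderOf_dvd'.mpr h.symm.dvd))

lemma nat_div_dvd_div {a b c : ℕ} (hab : a ∣ b) (hbc : b ∣ c) (ha : 0 < a) :
    c / b ∣ c / a := by
  obtain ⟨k, rfl⟩ := hab
  obtain ⟨l, rfl⟩ := hbc
  rcases Nat.eq_zero_or_pos k with rfl | hk
  · simp
  rw [Nat.mul_div_cancel_left l (Nat.mul_pos ha hk), Nat.mul_assoc,
    Nat.mul_div_cancel_left _ ha]
  exact dvd_mul_left l k



end

open Finset Subgroup in
/-- Neighbourhood formula for the generator class of an element of order d. -/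
theorem stmt2 (n : ℕ) [NeZero n] (x : Multiplicative (ZMod n)) (d : ℕ)
    (hd : orderOf x = d) :
    (setNbhd (powerGraph (Multiplicative (ZMod n))) (genClass x)).ncard
      = d + (∑ e ∈ (n / d).divisors, Nat.totient (n / e)) - 2 * Nat.totient d := by
  classical
  have hsetEq : setNbhd (powerGraph (Multiplicative (ZMod n))) (genClass x)
      = {v : Multiplicative (ZMod n) | orderOf v ≠ d ∧ (orderOf v ∣ d ∨ d ∣ orderOf v)} := by
    ext v
    simp only [setNbhd, genClass, powerGraph, Set.mem_setOf_eq]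
    constructor
    · rintro ⟨hv, a, ha, hne, hadj⟩
      have hoa : orderOf a = d := by rw [← hd]; exact zpowers_eq_iff_orderOf_eq'.mp ha
      refine ⟨fun hvd => hv (zpowers_eq_iff_orderOf_eq'.mpr (by rw [hvd, hd])), ?_⟩
      rcases hadj with h | h
      · exact Or.inl (hoa ▸ mem_zpowers_iff_orderOf_dvd'.mp h)
      · exact Or.inr (hoa ▸ mem_zpowers_iff_orderOf_dvd'.mp h)
    · rintro ⟨hvd, hcase⟩
      refine ⟨fun hmem => hvd (by rw [← hd]; exact zpowers_eq_iff_orderOf_eq'.mp hmem),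
        x, rfl, fun hvx => hvd (by rw [hvx, hd]), ?_⟩
      rcases hcase with h | h
      · exact Or.inl (mem_zpowers_iff_orderOf_dvd'.mpr (by rw [hd]; exact h))
      · exact Or.inr (mem_zpowers_iff_orderOf_dvd'.mpr (by rw [hd]; exact h))
  rw [hsetEq]

  classical
  have hcardG : Fintype.card (Multiplicative (ZMod n)) = n := by
    rw [Fintype.card_multiplicative]; exact ZMod.card n
  have hd0 : 0 < d := hd ▸ orderOf_pos x
  have hdn : d ∣ n := by
    have h := orderOf_dvd_card (x := x)
    rwa [hd, hcardG] at h
  have hn0 : n ≠ 0 := NeZero.ne n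
  set A : Finset (Multiplicative (ZMod n)) := univ.filter (fun v => orderOf v ∣ d) with hA
  set B : Finset (Multiplicative (ZMod n)) := univ.filter (fun v => d ∣ orderOf v) with hB
  set E : Finset (Multiplicative (ZMod n)) := univ.filter (fun v => orderOf v = d) with hE
  have hset : {v : Multiplicative (ZMod n) | orderOf v ≠ d ∧ (orderOf v ∣ d ∨ d ∣ orderOf v)}
      = ↑((A ∪ B) \ E) := by
    ext v
    simp only [Set.mem_setOf_eq, coe_sdiff, Set.mem_diff, coe_union, Set.mem_union, mem_coe,
      hA, hB, hE, mem_filter, mem_univ, true_and]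
    tauto
  rw [hset, Set.ncard_coe_finset]
  have hEA : E ⊆ A := by
    intro v hv; simp only [hE, mem_filter, mem_univ, true_and] at hv
    simp only [hA, mem_filter, mem_univ, true_and]; exact hv ▸ dvd_rfl
  have hAB : A ∩ B = E := by
    ext v
    simp only [hA, hB, hE, mem_inter, mem_filter, mem_univ, true_and]
    constructor
    · rintro ⟨h1, h2⟩; exact Nat.dvd_antisymm h1 h2
    · rintro rfl; exact ⟨dvd_rfl, dvd_rfl⟩
  have hcA : A.card = d := by
    have hAx : A = (Subgroup.zpowers x : Set (Multiplicative (ZMod n))).toFinset := by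
      ext v
      simp only [hA, mem_filter, mem_univ, true_and, Set.mem_toFinset, SetLike.mem_coe,
        mem_zpowers_iff_orderOf_dvd', hd]
    rw [hAx, Set.toFinset_card, ← hd, ← Nat.card_zpowers x, Nat.card_eq_fintype_card]; rfl
  have hcE : E.card = Nat.totient d := by
    have h := IsCyclic.card_orderOf_eq_totient (α := Multiplicative (ZMod n)) (d := d)
      (by rw [hcardG]; exact hdn)
    simpa [hE] using h
  have hcB : B.card = ∑ e ∈ (n / d).divisors, Nat.totient (n / e) := by
    set T : Finset ℕ := n.divisors.filter (fun m => d ∣ m) with hT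
    have h1 : B.card = ∑ m ∈ T, (B.filter (fun v => orderOf v = m)).card := by
      apply Finset.card_eq_sum_card_fiberwise
      intro v hv
      simp only [mem_coe, hB, mem_filter, mem_univ, true_and] at hv
      simp only [mem_coe, hT, mem_filter, Nat.mem_divisors]
      have h2 : orderOf v ∣ n := by
        have h3 := orderOf_dvd_card (x := v)
        rwa [hcardG] at h3
      exact ⟨⟨h2, hn0⟩, hv⟩
    have h2 : ∀ m ∈ T, (B.filter (fun v => orderOf v = m)).card = Nat.totient m := by
      intro m hm
      simp only [hT, mem_filter, Nat.mem_divisors] at hm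
      have heq : B.filter (fun v => orderOf v = m)
          = univ.filter (fun v : Multiplicative (ZMod n) => orderOf v = m) := by
        ext v
        simp only [hB, mem_filter, mem_univ, true_and]
        constructor
        · rintro ⟨-, h⟩; exact h
        · rintro h; exact ⟨h ▸ hm.2, h⟩
      rw [heq]
      exact IsCyclic.card_orderOf_eq_totient (by rw [hcardG]; exact hm.1.1)
    rw [h1, Finset.sum_congr rfl h2]
    refine Finset.sum_bij' (fun m _ => n / m) (fun e _ => n / e) ?_ ?_ ?_ ?_ ?_
    · intro m hm
      simp only [hT, mem_filter, Nat.mem_divisors] at hm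
      obtain ⟨⟨hmn, -⟩, hdm⟩ := hm
      refine Nat.mem_divisors.mpr ⟨?_, ?_⟩
      · exact nat_div_dvd_div hdm hmn hd0
      · have := Nat.div_pos (Nat.le_of_dvd (Nat.pos_of_ne_zero hn0) hdn) hd0
        omega
    · intro e he
      simp only [Nat.mem_divisors] at he
      obtain ⟨hed, -⟩ := he
      have hen : e ∣ n := hed.trans (Nat.div_dvd_of_dvd hdn)
      simp only [hT, mem_filter, Nat.mem_divisors]
      refine ⟨⟨Nat.div_dvd_of_dvd hen, hn0⟩, ?_⟩
      rw [Nat.dvd_div_iff_mul_dvd hen, Nat.mul_comm, ← Nat.dvd_div_iff_mul_dvd hdn]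
      exact hed
    · intro m hm
      simp only [hT, mem_filter, Nat.mem_divisors] at hm
      exact Nat.div_div_self hm.1.1 hn0
    · intro e he
      simp only [Nat.mem_divisors] at he
      exact Nat.div_div_self (he.1.trans (Nat.div_dvd_of_dvd hdn)) hn0
    · intro m hm
      simp only [hT, mem_filter, Nat.mem_divisors] at hm
      rw [Nat.div_div_self hm.1.1 hn0]
  have hsub2 : E ⊆ A ∪ B := hEA.trans Finset.subset_union_left
  have hu := Finset.card_union_add_card_inter A B
  rw [hAB, hcA, hcB, hcE] at hu
  rw [Finset.card_sdiff_of_subset hsub2, hcE]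
  omega
end

section
/- For any positive integer n, the power graph of the cyclic group C_n is cyclically separable if and only if: (i) n has at least two distinct prime factors, (ii) n is not of the form p_1p_2 with primes p_1 < p_2 and p_1 ∈ {2,3}, and (iii) n ≠ 12. -/
open Finset Subgroup

section CyclicGroup

variable {G : Type*} [Group G] [Fintype G] [IsCyclic G]

lemma mem_zpowers_iff_orderOf_dvd {x y : G} :
    x ∈ Subgroup.zpowers y ↔ orderOf x ∣ orderOf y := by
  constructor
  · exact orderOf_dvd_of_mem_zpowers
  · intro h
    obtain ⟨g, hg⟩ := IsCyclic.exists_monoid_generator (α := G)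
    have hgz : ∀ z : G, z ∈ Subgroup.zpowers g := fun z =>
      mem_powers_iff_mem_zpowers.mp (hg z)
    set N := Fintype.card G with hN
    have hgord : orderOf g = N := by
      have := orderOf_eq_card_of_forall_mem_zpowers hgz
      rwa [Nat.card_eq_fintype_card] at this
    have hNpos : 0 < N := Fintype.card_pos
    have key : ∀ a b : ℕ, orderOf (g ^ a) ∣ orderOf (g ^ b) →
        g ^ a ∈ Subgroup.zpowers (g ^ b) := by
      intro a b h
      have horda : orderOf (g ^ a) = N / N.gcd a := by rw [orderOf_pow, hgord]
      have hordb : orderOf (g ^ b) = N / N.gcd b := by rw [orderOf_pow, hgord]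
      rw [horda, hordb] at h
      have hga : N.gcd a ∣ N := Nat.gcd_dvd_left N a
      have hgb : N.gcd b ∣ N := Nat.gcd_dvd_left N b
      have hgapos : 0 < N.gcd a := Nat.gcd_pos_of_pos_left a hNpos
      obtain ⟨t, ht⟩ := h
      have hq : 0 < N / N.gcd a := Nat.div_pos (Nat.le_of_dvd hNpos hga) hgapos
      have e1 : N / N.gcd a * N.gcd a = N := Nat.div_mul_cancel hga
      have e2 : N / N.gcd b * N.gcd b = N := Nat.div_mul_cancel hgb
      have e3 : N / N.gcd a * N.gcd a = N / N.gcd a * (t * N.gcd b) := by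
        rw [e1]
        calc N = N / N.gcd b * N.gcd b := e2.symm
          _ = N / N.gcd a * t * N.gcd b := by rw [ht]
          _ = N / N.gcd a * (t * N.gcd b) := by ring
      have h4 : N.gcd a = t * N.gcd b := Nat.eq_of_mul_eq_mul_left hq e3
      have hba : N.gcd b ∣ a :=
        dvd_trans ⟨t, by rw [h4, mul_comm]⟩ (Nat.gcd_dvd_right N a)
      have hgN1 : g ^ (N : ℤ) = 1 := by
        rw [zpow_natCast, ← hgord]; exact pow_orderOf_eq_one g
      have hmem : g ^ N.gcd b ∈ Subgroup.zpowers (g ^ b) := by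
        refine ⟨Nat.gcdB N b, ?_⟩
        have bez : ((N.gcd b : ℕ) : ℤ) = N * Nat.gcdA N b + b * Nat.gcdB N b :=
          Nat.gcd_eq_gcd_ab N b
        calc (g ^ b) ^ Nat.gcdB N b
            = (g ^ (b : ℤ)) ^ Nat.gcdB N b := by rw [zpow_natCast]
          _ = g ^ ((b : ℤ) * Nat.gcdB N b) := by rw [zpow_mul]
          _ = g ^ ((N : ℤ) * Nat.gcdA N b) * g ^ ((b : ℤ) * Nat.gcdB N b) := by
              rw [zpow_mul g (N : ℤ) (Nat.gcdA N b), hgN1, one_zpow, one_mul]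
          _ = g ^ ((N : ℤ) * Nat.gcdA N b + (b : ℤ) * Nat.gcdB N b) := (zpow_add g _ _).symm
          _ = g ^ ((N.gcd b : ℕ) : ℤ) := by rw [← bez]
          _ = g ^ N.gcd b := zpow_natCast g _
      have : g ^ a = (g ^ N.gcd b) ^ (a / N.gcd b) := by
        rw [← pow_mul, Nat.mul_div_cancel' hba]
      rw [this]
      exact Subgroup.pow_mem _ hmem _
    obtain ⟨a, ha⟩ := mem_powers_iff_mem_zpowers.mpr (hgz x)
    obtain ⟨b, hb⟩ := mem_powers_iff_mem_zpowers.mpr (hgz y)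
    simp only at ha hb
    rw [← ha, ← hb]
    exact key a b (by rw [ha, hb]; exact h)

lemma powerGraph_adj_iff {x y : G} :
    (powerGraph G).Adj x y ↔ x ≠ y ∧ (orderOf x ∣ orderOf y ∨ orderOf y ∣ orderOf x) := by
  show (x ≠ y ∧ _) ↔ _
  rw [mem_zpowers_iff_orderOf_dvd, mem_zpowers_iff_orderOf_dvd]

lemma exists_three_distinct_orderOf {d : ℕ} (hd : d ∣ Fintype.card G) (h3 : 3 ≤ d.totient) :
    ∃ a b c : G, a ≠ b ∧ a ≠ c ∧ b ≠ c ∧ orderOf a = d ∧ orderOf b = d ∧ orderOf c = d := by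
  classical
  have hcard := IsCyclic.card_orderOf_eq_totient (α := G) hd
  have h2 : 2 < #{a : G | orderOf a = d} := by omega
  obtain ⟨a, b, c, ha, hb, hc, hab, hac, hbc⟩ := Finset.two_lt_card_iff.mp h2
  simp only [Finset.mem_filter] at ha hb hc
  exact ⟨a, b, c, hab, hac, hbc, ha.2, hb.2, hc.2⟩

lemma exists_two_distinct_orderOf {d : ℕ} (hd : d ∣ Fintype.card G) (h2 : 2 ≤ d.totient) :
    ∃ a b : G, a ≠ b ∧ orderOf a = d ∧ orderOf b = d := by
  classical
  have hcard := IsCyclic.card_orderOf_eq_totient (α := G) hd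
  have h1 : 1 < #{a : G | orderOf a = d} := by omega
  obtain ⟨a, b, ha, hb, hab⟩ := Finset.one_lt_card_iff.mp h1
  simp only [Finset.mem_filter] at ha hb
  exact ⟨a, b, hab, ha.2, hb.2⟩

lemma exists_orderOf {d : ℕ} (hd : d ∣ Fintype.card G) : ∃ a : G, orderOf a = d := by
  classical
  have hcard := IsCyclic.card_orderOf_eq_totient (α := G) hd
  have hdpos : 0 < d := Nat.pos_of_dvd_of_pos hd Fintype.card_pos
  have h1 : 0 < #{a : G | orderOf a = d} := by
    rw [hcard]; exact Nat.totient_pos.mpr hdpos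
  obtain ⟨a, ha⟩ := Finset.card_pos.mp h1
  simp only [Finset.mem_filter] at ha
  exact ⟨a, ha.2⟩

lemma three_distinct_le_totient {d : ℕ} {a b c : G} (hab : a ≠ b) (hac : a ≠ c) (hbc : b ≠ c)
    (ha : orderOf a = d) (hb : orderOf b = d) (hc : orderOf c = d) : 3 ≤ d.totient := by
  classical
  have hd : d ∣ Fintype.card G := ha ▸ orderOf_dvd_card
  have hcard := IsCyclic.card_orderOf_eq_totient (α := G) hd
  have : 2 < #{x : G | orderOf x = d} :=
    Finset.two_lt_card_iff.mpr ⟨a, b, c, by simp [ha], by simp [hb], by simp [hc], hab, hac, hbc⟩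
  omega

end CyclicGroup

section Helpers

lemma reachable_of_mem_support {V : Type*} {Γ : SimpleGraph V} {u w x : V}
    (p : Γ.Walk u w) (h : x ∈ p.support) : Γ.Reachable u x := by
  classical exact ⟨p.takeUntil x h⟩

lemma inCyclicComp_three {V : Type*} {Γ : SimpleGraph V} {u : V} (h : InCyclicComp Γ u) :
    ∃ x y z : V, Γ.Reachable u x ∧ Γ.Reachable u y ∧ Γ.Reachable u z ∧
      x ≠ y ∧ x ≠ z ∧ y ≠ z := by
  classical
  obtain ⟨w, hw, c, hc⟩ := h
  have hlen : 3 ≤ c.length := hc.three_le_length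
  have hnd : c.support.tail.Nodup := hc.support_nodup
  have hlt : c.support.tail.length = c.length := by
    rw [List.length_tail, c.length_support]; omega
  obtain ⟨x, y, z, rest, ht⟩ : ∃ x y z rest, c.support.tail = x :: y :: z :: rest := by
    rcases h3 : c.support.tail with _ | ⟨x, _ | ⟨y, _ | ⟨z, rest⟩⟩⟩
    · rw [h3] at hlt; simp at hlt; omega
    · rw [h3] at hlt; simp at hlt; omega
    · rw [h3] at hlt; simp at hlt; omega
    · exact ⟨x, y, z, rest, rfl⟩
  have hsub : ∀ a : V, a ∈ c.support.tail → a ∈ c.support := by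
    intro a ha
    rw [c.support_eq_cons]
    exact List.mem_cons_of_mem _ ha
  have hx : x ∈ c.support := hsub x (by rw [ht]; simp)
  have hy : y ∈ c.support := hsub y (by rw [ht]; simp)
  have hz : z ∈ c.support := hsub z (by rw [ht]; simp)
  rw [ht] at hnd
  simp only [List.nodup_cons, List.mem_cons] at hnd
  push_neg at hnd
  exact ⟨x, y, z, hw.trans ⟨c.takeUntil x hx⟩, hw.trans ⟨c.takeUntil y hy⟩,
    hw.trans ⟨c.takeUntil z hz⟩, hnd.1.1, hnd.1.2.1, hnd.2.1.1⟩

lemma dvd_total_of_primeFactors_le_one {n : ℕ} (hn : n ≠ 0) (h : n.primeFactors.card ≤ 1)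
    {a b : ℕ} (ha : a ∣ n) (hb : b ∣ n) : a ∣ b ∨ b ∣ a := by
  rcases Nat.lt_or_ge n.primeFactors.card 1 with h1 | h1
  · have he : n.primeFactors = ∅ := Finset.card_eq_zero.mp (by omega)
    have hn1 : n = 1 := by
      rcases Nat.primeFactors_eq_empty.mp he with h' | h'
      · exact absurd h' hn
      · exact h'
    subst hn1
    rw [Nat.dvd_one] at ha hb
    subst ha; subst hb; exact Or.inl dvd_rfl
  · have hcard : n.primeFactors.card = 1 := le_antisymm h h1
    have hpp : IsPrimePow n := isPrimePow_iff_card_primeFactors_eq_one.mpr hcard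
    obtain ⟨p, k, hp, hk, rfl⟩ := hpp
    have hp' : p.Prime := hp.nat_prime
    obtain ⟨i, _, rfl⟩ := (Nat.dvd_prime_pow hp').mp ha
    obtain ⟨j, _, rfl⟩ := (Nat.dvd_prime_pow hp').mp hb
    rcases le_total i j with hij | hij
    · exact Or.inl (pow_dvd_pow p hij)
    · exact Or.inr (pow_dvd_pow p hij)

lemma dvd_mul_prime {p q a : ℕ} (hp : p.Prime) (hq : q.Prime) (hne : p ≠ q) (ha : a ∣ p * q) :
    a = 1 ∨ a = p ∨ a = q ∨ a = p * q := by
  have h1 : a.gcd p ∣ p := Nat.gcd_dvd_right a p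
  rcases hp.eq_one_or_self_of_dvd _ h1 with he | he
  · have hcop : a.Coprime p := he
    have haq : a ∣ q := hcop.dvd_of_dvd_mul_left ha
    rcases hq.eq_one_or_self_of_dvd _ haq with h' | h'
    · exact Or.inl h'
    · exact Or.inr (Or.inr (Or.inl h'))
  · have hpa : p ∣ a := he ▸ Nat.gcd_dvd_left a p
    obtain ⟨c, rfl⟩ := hpa
    have hcq : c ∣ q := (mul_dvd_mul_iff_left hp.pos.ne').mp ha
    rcases hq.eq_one_or_self_of_dvd _ hcq with h' | h'
    · subst h'; exact Or.inr (Or.inl (mul_one p))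
    · subst h'; exact Or.inr (Or.inr (Or.inr rfl))

lemma dvd12 {d : ℕ} (h : d ∣ 12) : d = 1 ∨ d = 2 ∨ d = 3 ∨ d = 4 ∨ d = 6 ∨ d = 12 := by
  have hle : d ≤ 12 := Nat.le_of_dvd (by norm_num) h
  interval_cases d <;> omega

def ordVals : Fin 4 → ℕ := ![2, 3, 4, 6]

lemma aux12 (a1 a2 a3 b1 b2 b3 : Fin 4)
    (h : ∀ i ∈ [a1, a2, a3], ∀ j ∈ [b1, b2, b3],
      ¬ ordVals i ∣ ordVals j ∧ ¬ ordVals j ∣ ordVals i) :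
    (a1 = a2 ∧ a1 = a3) ∨ (b1 = b2 ∧ b1 = b3) := by
  revert h; revert a1 a2 a3 b1 b2 b3; decide

end Helpers

section Forward
open SimpleGraph

variable {G : Type*} [Group G] [Fintype G] [IsCyclic G]

theorem forward_necessary (h : CyclicallySeparable (powerGraph G)) :
    2 ≤ (Fintype.card G).primeFactors.card ∧
      (¬ ∃ p q : ℕ, p.Prime ∧ q.Prime ∧ p < q ∧ (p = 2 ∨ p = 3) ∧ Fintype.card G = p * q) ∧
      Fintype.card G ≠ 12 := by
  obtain ⟨S, u, v, hnr, hu, hv⟩ := h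
  set Γ' := (powerGraph G).induce Sᶜ with hΓ'
  obtain ⟨x1, x2, x3, hx1, hx2, hx3, hx12, hx13, hx23⟩ := inCyclicComp_three hu
  obtain ⟨y1, y2, y3, hy1, hy2, hy3, hy12, hy13, hy23⟩ := inCyclicComp_three hv
  have master : ∀ x y : ↥(Sᶜ), Γ'.Reachable u x → Γ'.Reachable v y →
      (x : G) ≠ (y : G) ∧ ¬ orderOf (x : G) ∣ orderOf (y : G) ∧
        ¬ orderOf (y : G) ∣ orderOf (x : G) := by
    intro x y hx hy
    have hne : (x : G) ≠ (y : G) := by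
      intro he
      rw [← Subtype.ext he] at hy
      exact hnr (hx.trans hy.symm)
    have hnadj : ¬ (powerGraph G).Adj (x : G) (y : G) := by
      intro hadj
      have hadj' : Γ'.Adj x y := hadj
      exact hnr (hx.trans (hadj'.reachable.trans hy.symm))
    refine ⟨hne, ?_, ?_⟩
    · intro hdvd; exact hnadj (powerGraph_adj_iff.mpr ⟨hne, Or.inl hdvd⟩)
    · intro hdvd; exact hnadj (powerGraph_adj_iff.mpr ⟨hne, Or.inr hdvd⟩)
  have hxc : ∀ x : ↥(Sᶜ), orderOf (x : G) ∣ Fintype.card G := fun x => orderOf_dvd_card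
  have cx12 : (x1 : G) ≠ x2 := fun h' => hx12 (Subtype.ext h')
  have cx13 : (x1 : G) ≠ x3 := fun h' => hx13 (Subtype.ext h')
  have cx23 : (x2 : G) ≠ x3 := fun h' => hx23 (Subtype.ext h')
  have cy12 : (y1 : G) ≠ y2 := fun h' => hy12 (Subtype.ext h')
  have cy13 : (y1 : G) ≠ y3 := fun h' => hy13 (Subtype.ext h')
  have cy23 : (y2 : G) ≠ y3 := fun h' => hy23 (Subtype.ext h')
  have hn0 : Fintype.card G ≠ 0 := Fintype.card_ne_zero
  refine ⟨?_, ?_, ?_⟩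
  · by_contra hlt
    push_neg at hlt
    have h1 : (Fintype.card G).primeFactors.card ≤ 1 := by omega
    rcases dvd_total_of_primeFactors_le_one hn0 h1 (hxc x1) (hxc y1) with hd | hd
    · exact (master x1 y1 hx1 hy1).2.1 hd
    · exact (master x1 y1 hx1 hy1).2.2 hd
  · rintro ⟨p, q, hp, hq, hpq, hpe, hcardn⟩
    have hne : p ≠ q := Nat.ne_of_lt hpq
    have hordX : ∀ x : ↥(Sᶜ), Γ'.Reachable u x →
        orderOf (x : G) = p ∨ orderOf (x : G) = q := by
      intro x hx
      rcases dvd_mul_prime hp hq hne (hcardn ▸ hxc x) with h' | h' | h' | h'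
      · exact absurd (h' ▸ one_dvd _ : orderOf (x : G) ∣ orderOf (y1 : G))
          (master x y1 hx hy1).2.1
      · exact Or.inl h'
      · exact Or.inr h'
      · exact absurd (h' ▸ (hcardn ▸ hxc y1) : orderOf (y1 : G) ∣ orderOf (x : G))
          (master x y1 hx hy1).2.2
    have hordY : ∀ y : ↥(Sᶜ), Γ'.Reachable v y →
        orderOf (y : G) = p ∨ orderOf (y : G) = q := by
      intro y hy
      rcases dvd_mul_prime hp hq hne (hcardn ▸ hxc y) with h' | h' | h' | h'
      · exact absurd (h' ▸ one_dvd _ : orderOf (y : G) ∣ orderOf (x1 : G))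
          (master x1 y hx1 hy).2.2
      · exact Or.inl h'
      · exact Or.inr h'
      · exact absurd (h' ▸ (hcardn ▸ hxc x1) : orderOf (x1 : G) ∣ orderOf (y : G))
          (master x1 y hx1 hy).2.1
    have hφp : p.totient ≤ 2 := by
      rcases hpe with rfl | rfl
      · decide
      · decide
    have hexX : ∃ x : ↥(Sᶜ), Γ'.Reachable u x ∧ orderOf (x : G) = q := by
      rcases hordX x1 hx1 with h' | h'
      · rcases hordX x2 hx2 with h'' | h''
        · rcases hordX x3 hx3 with h''' | h'''
          · exact absurd (three_distinct_le_totient cx12 cx13 cx23 h' h'' h''') (by omega)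
          · exact ⟨x3, hx3, h'''⟩
        · exact ⟨x2, hx2, h''⟩
      · exact ⟨x1, hx1, h'⟩
    have hexY : ∃ y : ↥(Sᶜ), Γ'.Reachable v y ∧ orderOf (y : G) = q := by
      rcases hordY y1 hy1 with h' | h'
      · rcases hordY y2 hy2 with h'' | h''
        · rcases hordY y3 hy3 with h''' | h'''
          · exact absurd (three_distinct_le_totient cy12 cy13 cy23 h' h'' h''') (by omega)
          · exact ⟨y3, hy3, h'''⟩
        · exact ⟨y2, hy2, h''⟩
      · exact ⟨y1, hy1, h'⟩
    obtain ⟨x, hx, hxq⟩ := hexX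
    obtain ⟨y, hy, hyq⟩ := hexY
    exact (master x y hx hy).2.1 (by rw [hxq, hyq])
  · intro hcard12
    have hordX : ∀ x : ↥(Sᶜ), Γ'.Reachable u x →
        orderOf (x : G) = 2 ∨ orderOf (x : G) = 3 ∨ orderOf (x : G) = 4 ∨
          orderOf (x : G) = 6 := by
      intro x hx
      rcases dvd12 (hcard12 ▸ hxc x) with h' | h' | h' | h' | h' | h'
      · exact absurd (h' ▸ one_dvd _ : orderOf (x : G) ∣ orderOf (y1 : G))
          (master x y1 hx hy1).2.1
      · exact Or.inl h'
      · exact Or.inr (Or.inl h')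
      · exact Or.inr (Or.inr (Or.inl h'))
      · exact Or.inr (Or.inr (Or.inr h'))
      · exact absurd (h' ▸ (hcard12 ▸ hxc y1) : orderOf (y1 : G) ∣ orderOf (x : G))
          (master x y1 hx hy1).2.2
    have hordY : ∀ y : ↥(Sᶜ), Γ'.Reachable v y →
        orderOf (y : G) = 2 ∨ orderOf (y : G) = 3 ∨ orderOf (y : G) = 4 ∨
          orderOf (y : G) = 6 := by
      intro y hy
      rcases dvd12 (hcard12 ▸ hxc y) with h' | h' | h' | h' | h' | h'
      · exact absurd (h' ▸ one_dvd _ : orderOf (y : G) ∣ orderOf (x1 : G))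
          (master x1 y hx1 hy).2.2
      · exact Or.inl h'
      · exact Or.inr (Or.inl h')
      · exact Or.inr (Or.inr (Or.inl h'))
      · exact Or.inr (Or.inr (Or.inr h'))
      · exact absurd (h' ▸ (hcard12 ▸ hxc x1) : orderOf (x1 : G) ∣ orderOf (y : G))
          (master x1 y hx1 hy).2.1
    have idx : ∀ d : ℕ, d = 2 ∨ d = 3 ∨ d = 4 ∨ d = 6 → ∃ i : Fin 4, ordVals i = d := by
      rintro d (rfl | rfl | rfl | rfl)
      exacts [⟨0, rfl⟩, ⟨1, rfl⟩, ⟨2, rfl⟩, ⟨3, rfl⟩]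
    obtain ⟨i1, hi1⟩ := idx _ (hordX x1 hx1)
    obtain ⟨i2, hi2⟩ := idx _ (hordX x2 hx2)
    obtain ⟨i3, hi3⟩ := idx _ (hordX x3 hx3)
    obtain ⟨j1, hj1⟩ := idx _ (hordY y1 hy1)
    obtain ⟨j2, hj2⟩ := idx _ (hordY y2 hy2)
    obtain ⟨j3, hj3⟩ := idx _ (hordY y3 hy3)
    have hcross : ∀ i ∈ [i1, i2, i3], ∀ j ∈ [j1, j2, j3],
        ¬ ordVals i ∣ ordVals j ∧ ¬ ordVals j ∣ ordVals i := by
      intro i hi j hj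
      simp only [List.mem_cons, List.not_mem_nil, or_false] at hi hj
      rcases hi with rfl | rfl | rfl <;> rcases hj with rfl | rfl | rfl <;>
        simp only [hi1, hi2, hi3, hj1, hj2, hj3] <;>
        first
          | exact ⟨(master x1 y1 hx1 hy1).2.1, (master x1 y1 hx1 hy1).2.2⟩
          | exact ⟨(master x1 y2 hx1 hy2).2.1, (master x1 y2 hx1 hy2).2.2⟩
          | exact ⟨(master x1 y3 hx1 hy3).2.1, (master x1 y3 hx1 hy3).2.2⟩
          | exact ⟨(master x2 y1 hx2 hy1).2.1, (master x2 y1 hx2 hy1).2.2⟩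
          | exact ⟨(master x2 y2 hx2 hy2).2.1, (master x2 y2 hx2 hy2).2.2⟩
          | exact ⟨(master x2 y3 hx2 hy3).2.1, (master x2 y3 hx2 hy3).2.2⟩
          | exact ⟨(master x3 y1 hx3 hy1).2.1, (master x3 y1 hx3 hy1).2.2⟩
          | exact ⟨(master x3 y2 hx3 hy2).2.1, (master x3 y2 hx3 hy2).2.2⟩
          | exact ⟨(master x3 y3 hx3 hy3).2.1, (master x3 y3 hx3 hy3).2.2⟩
    rcases aux12 i1 i2 i3 j1 j2 j3 hcross with ⟨h12, h13⟩ | ⟨h12, h13⟩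
    · have e2 : orderOf (x2 : G) = orderOf (x1 : G) := by rw [← hi1, ← hi2, h12]
      have e3 : orderOf (x3 : G) = orderOf (x1 : G) := by rw [← hi1, ← hi3, h13]
      have h3t := three_distinct_le_totient cx12 cx13 cx23 rfl e2 e3
      rcases hordX x1 hx1 with h' | h' | h' | h' <;> rw [h'] at h3t <;>
        exact absurd h3t (by decide)
    · have e2 : orderOf (y2 : G) = orderOf (y1 : G) := by rw [← hj1, ← hj2, h12]
      have e3 : orderOf (y3 : G) = orderOf (y1 : G) := by rw [← hj1, ← hj3, h13]
      have h3t := three_distinct_le_totient cy12 cy13 cy23 rfl e2 e3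
      rcases hordY y1 hy1 with h' | h' | h' | h' <;> rw [h'] at h3t <;>
        exact absurd h3t (by decide)

end Forward
open SimpleGraph

lemma triangle_cycle {V : Type*} {Γ : SimpleGraph V} {p q r : V}
    (h1 : Γ.Adj p q) (h2 : Γ.Adj q r) (h3 : Γ.Adj r p)
    (hpq : p ≠ q) (hpr : p ≠ r) (hqr : q ≠ r) :
    ∃ c : Γ.Walk p p, c.IsCycle := by
  refine ⟨Walk.cons h1 (Walk.cons h2 (Walk.cons h3 Walk.nil)), ?_, ?_⟩
  · constructor
    · constructor
      simp only [Walk.edges_cons, Walk.edges_nil, List.nodup_cons, List.mem_cons,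
        List.not_mem_nil, or_false, List.nodup_nil, and_true, List.mem_singleton,
        Sym2.eq_iff]
      tauto
    · simp
  · simp only [Walk.support_cons, Walk.support_nil, List.tail_cons, List.nodup_cons,
      List.mem_cons, List.not_mem_nil, or_false, List.nodup_nil, and_true,
      List.mem_singleton]
    tauto

lemma walk_closed {V : Type*} {Γ : SimpleGraph V} (P : V → Prop)
    (hP : ∀ a b : V, P a → Γ.Adj a b → P b) :
    ∀ (s t : V) (p : Γ.Walk s t), P s → P t := by
  intro s t p
  induction p with
  | nil => exact id
  | cons hadj p ih => exact fun hs => ih (hP _ _ hs hadj)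

section Construct
open SimpleGraph

variable {G : Type*} [Group G] [Fintype G] [IsCyclic G]

lemma construct_separable {d1 d2 e1 e2 : ℕ}
    (hd12 : d1 ∣ d2) (hd2n : d2 ∣ Fintype.card G)
    (he12 : e1 ∣ e2) (he2n : e2 ∣ Fintype.card G)
    (hcross : ∀ a b : ℕ, (a = d1 ∨ a = d2) → (b = e1 ∨ b = e2) → ¬ a ∣ b ∧ ¬ b ∣ a)
    (hdsup : (d1 = d2 ∧ 3 ≤ d2.totient) ∨ (d1 ≠ d2 ∧ 2 ≤ d2.totient))
    (hesup : (e1 = e2 ∧ 3 ≤ e2.totient) ∨ (e1 ≠ e2 ∧ 2 ≤ e2.totient)) :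
    CyclicallySeparable (powerGraph G) := by
  have getTriple : ∀ f1 f2 : ℕ, f1 ∣ f2 → f2 ∣ Fintype.card G →
      ((f1 = f2 ∧ 3 ≤ f2.totient) ∨ (f1 ≠ f2 ∧ 2 ≤ f2.totient)) →
      ∃ a b c : G, a ≠ b ∧ a ≠ c ∧ b ≠ c ∧
        orderOf a = f1 ∧ orderOf b = f2 ∧ orderOf c = f2 := by
    intro f1 f2 h12 h2n hsup
    rcases hsup with ⟨rfl, h3⟩ | ⟨hne, h2⟩
    · exact exists_three_distinct_orderOf h2n h3
    · obtain ⟨b, c, hbc, hb, hc⟩ := exists_two_distinct_orderOf h2n h2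
      obtain ⟨a, ha⟩ := exists_orderOf (dvd_trans h12 h2n)
      exact ⟨a, b, c, fun h => hne (by rw [← ha, ← hb, h]),
        fun h => hne (by rw [← ha, ← hc, h]), hbc, ha, hb, hc⟩
  obtain ⟨a1, a2, a3, ha12, ha13, ha23, hoa1, hoa2, hoa3⟩ := getTriple d1 d2 hd12 hd2n hdsup
  obtain ⟨b1, b2, b3, hb12, hb13, hb23, hob1, hob2, hob3⟩ := getTriple e1 e2 he12 he2n hesup
  have hdA : ∀ g : G, g = a1 ∨ g = a2 ∨ g = a3 → orderOf g = d1 ∨ orderOf g = d2 := by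
    rintro g (rfl | rfl | rfl) <;> simp [hoa1, hoa2, hoa3]
  have hdB : ∀ g : G, g = b1 ∨ g = b2 ∨ g = b3 → orderOf g = e1 ∨ orderOf g = e2 := by
    rintro g (rfl | rfl | rfl) <;> simp [hob1, hob2, hob3]
  have hAB : ∀ g g' : G, (g = a1 ∨ g = a2 ∨ g = a3) → (g' = b1 ∨ g' = b2 ∨ g' = b3) →
      ¬ (powerGraph G).Adj g g' ∧ g ≠ g' := by
    intro g g' hg hg'
    have hc := hcross (orderOf g) (orderOf g') (hdA g hg) (hdB g' hg')
    refine ⟨?_, fun he => hc.1 (he ▸ dvd_rfl)⟩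
    intro hadj
    rcases (powerGraph_adj_iff.mp hadj).2 with h | h
    · exact hc.1 h
    · exact hc.2 h
  set T : Set G := {g | g = a1 ∨ g = a2 ∨ g = a3 ∨ g = b1 ∨ g = b2 ∨ g = b3} with hT
  have mtc : ∀ g : G, (g = a1 ∨ g = a2 ∨ g = a3 ∨ g = b1 ∨ g = b2 ∨ g = b3) →
      g ∈ ((Tᶜ)ᶜ : Set G) := by
    intro g hg; rw [compl_compl]; exact hg
  refine ⟨Tᶜ, ?_⟩
  set Γ' := (powerGraph G).induce ((Tᶜ)ᶜ) with hΓ'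
  let u1 : ↥((Tᶜ)ᶜ) := ⟨a1, mtc a1 (Or.inl rfl)⟩
  let u2 : ↥((Tᶜ)ᶜ) := ⟨a2, mtc a2 (Or.inr (Or.inl rfl))⟩
  let u3 : ↥((Tᶜ)ᶜ) := ⟨a3, mtc a3 (Or.inr (Or.inr (Or.inl rfl)))⟩
  let v1 : ↥((Tᶜ)ᶜ) := ⟨b1, mtc b1 (Or.inr (Or.inr (Or.inr (Or.inl rfl))))⟩
  let v2 : ↥((Tᶜ)ᶜ) := ⟨b2, mtc b2 (Or.inr (Or.inr (Or.inr (Or.inr (Or.inl rfl)))))⟩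
  let v3 : ↥((Tᶜ)ᶜ) := ⟨b3, mtc b3 (Or.inr (Or.inr (Or.inr (Or.inr (Or.inr rfl)))))⟩
  have s12 : u1 ≠ u2 := fun h => ha12 (congrArg Subtype.val h)
  have s13 : u1 ≠ u3 := fun h => ha13 (congrArg Subtype.val h)
  have s23 : u2 ≠ u3 := fun h => ha23 (congrArg Subtype.val h)
  have t12 : v1 ≠ v2 := fun h => hb12 (congrArg Subtype.val h)
  have t13 : v1 ≠ v3 := fun h => hb13 (congrArg Subtype.val h)
  have t23 : v2 ≠ v3 := fun h => hb23 (congrArg Subtype.val h)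
  have adjA12 : Γ'.Adj u1 u2 :=
    powerGraph_adj_iff.mpr ⟨ha12, Or.inl (show orderOf a1 ∣ orderOf a2 by rw [hoa1, hoa2]; exact hd12)⟩
  have adjA23 : Γ'.Adj u2 u3 :=
    powerGraph_adj_iff.mpr ⟨ha23, Or.inl (show orderOf a2 ∣ orderOf a3 by rw [hoa2, hoa3])⟩
  have adjA31 : Γ'.Adj u3 u1 :=
    powerGraph_adj_iff.mpr ⟨fun h => ha13 h.symm, Or.inr (show orderOf a1 ∣ orderOf a3 by rw [hoa1, hoa3]; exact hd12)⟩
  have adjB12 : Γ'.Adj v1 v2 :=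
    powerGraph_adj_iff.mpr ⟨hb12, Or.inl (show orderOf b1 ∣ orderOf b2 by rw [hob1, hob2]; exact he12)⟩
  have adjB23 : Γ'.Adj v2 v3 :=
    powerGraph_adj_iff.mpr ⟨hb23, Or.inl (show orderOf b2 ∣ orderOf b3 by rw [hob2, hob3])⟩
  have adjB31 : Γ'.Adj v3 v1 :=
    powerGraph_adj_iff.mpr ⟨fun h => hb13 h.symm, Or.inr (show orderOf b1 ∣ orderOf b3 by rw [hob1, hob3]; exact he12)⟩
  obtain ⟨cA, hcA⟩ := triangle_cycle adjA12 adjA23 adjA31 s12 s13 s23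
  obtain ⟨cB, hcB⟩ := triangle_cycle adjB12 adjB23 adjB31 t12 t13 t23
  have confine : ∀ (s t : ↥((Tᶜ)ᶜ)) (p : Γ'.Walk s t),
      ((s : G) = a1 ∨ (s : G) = a2 ∨ (s : G) = a3) →
      ((t : G) = a1 ∨ (t : G) = a2 ∨ (t : G) = a3) := by
    apply walk_closed (Γ := Γ') (P := fun x => (x : G) = a1 ∨ (x : G) = a2 ∨ (x : G) = a3)
    intro x y hx hadj
    have hyT : (y : G) ∈ T := by
      have h2 := y.2
      simp only [Set.mem_compl_iff, not_not] at h2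
      exact h2
    rcases hyT with h | h | h | h | h | h
    · exact Or.inl h
    · exact Or.inr (Or.inl h)
    · exact Or.inr (Or.inr h)
    · exact absurd hadj (hAB _ _ hx (Or.inl h)).1
    · exact absurd hadj (hAB _ _ hx (Or.inr (Or.inl h))).1
    · exact absurd hadj (hAB _ _ hx (Or.inr (Or.inr h))).1
  refine ⟨u1, v1, ?_, ⟨u1, Reachable.refl u1, cA, hcA⟩, ⟨v1, Reachable.refl v1, cB, hcB⟩⟩
  intro hre
  obtain ⟨p⟩ := hre
  rcases confine u1 v1 p (Or.inl rfl) with h | h | h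
  · exact (hAB a1 b1 (Or.inl rfl) (Or.inl rfl)).2 h.symm
  · exact (hAB a2 b1 (Or.inr (Or.inl rfl)) (Or.inl rfl)).2 h.symm
  · exact (hAB a3 b1 (Or.inr (Or.inr rfl)) (Or.inl rfl)).2 h.symm

end Construct
section Arith

lemma key_arith {n : ℕ} (hn : n ≠ 0) (h1 : 2 ≤ n.primeFactors.card)
    (h2 : ¬ ∃ p q : ℕ, p.Prime ∧ q.Prime ∧ p < q ∧ (p = 2 ∨ p = 3) ∧ n = p * q)
    (h3 : n ≠ 12) :
    ∃ d1 d2 e1 e2 : ℕ, d1 ∣ d2 ∧ d2 ∣ n ∧ e1 ∣ e2 ∧ e2 ∣ n ∧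
      (∀ a b : ℕ, (a = d1 ∨ a = d2) → (b = e1 ∨ b = e2) → ¬ a ∣ b ∧ ¬ b ∣ a) ∧
      ((d1 = d2 ∧ 3 ≤ d2.totient) ∨ (d1 ≠ d2 ∧ 2 ≤ d2.totient)) ∧
      ((e1 = e2 ∧ 3 ≤ e2.totient) ∨ (e1 ≠ e2 ∧ 2 ≤ e2.totient)) := by
  have hnpos : 0 < n := Nat.pos_of_ne_zero hn
  have hne : n.primeFactors.Nonempty := Finset.card_pos.mp (by omega)
  set q := n.primeFactors.max' hne with hqdef
  have hqmem : q ∈ n.primeFactors := Finset.max'_mem _ hne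
  have hqp : q.Prime := Nat.prime_of_mem_primeFactors hqmem
  have hqn : q ∣ n := Nat.dvd_of_mem_primeFactors hqmem
  have hqmax : ∀ r ∈ n.primeFactors, r ≤ q := fun r hr => Finset.le_max' _ r hr
  obtain ⟨r, hrmem, hrne⟩ : ∃ r ∈ n.primeFactors, r ≠ q := by
    by_contra hcon
    push_neg at hcon
    have hsub : n.primeFactors ⊆ {q} := fun x hx => Finset.mem_singleton.mpr (hcon x hx)
    have := Finset.card_le_card hsub
    simp at this
    omega
  have hrp : r.Prime := Nat.prime_of_mem_primeFactors hrmem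
  have hrn : r ∣ n := Nat.dvd_of_mem_primeFactors hrmem
  have hrq : r < q := lt_of_le_of_ne (hqmax r hrmem) hrne
  have hQm : q ^ n.factorization q * (n / q ^ n.factorization q) = n :=
    Nat.ordProj_mul_ordCompl_eq_self n q
  have hQdvd : q ^ n.factorization q ∣ n := Nat.ordProj_dvd n q
  have hmn : n / q ^ n.factorization q ∣ n := Nat.ordCompl_dvd n q
  have hqnm : ¬ q ∣ n / q ^ n.factorization q := Nat.not_dvd_ordCompl hqp hn
  set b := n.factorization q with hbdef
  set m := n / q ^ b with hmdef
  have hb1 : 1 ≤ b := hqp.factorization_pos_of_dvd hn hqn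
  have hm0 : m ≠ 0 := by
    intro h
    rw [h, mul_zero] at hQm
    exact hn hQm.symm
  have hrm : r ∣ m := by
    have hco : r.Coprime (q ^ b) := ((Nat.coprime_primes hrp hqp).mpr hrne).pow_right b
    exact hco.dvd_of_dvd_mul_left (hQm ▸ hrn)
  have hm2 : 2 ≤ m := le_trans hrp.two_le (Nat.le_of_dvd (Nat.pos_of_ne_zero hm0) hrm)
  have hq3 : 3 ≤ q := by
    have := hrp.two_le
    omega
  have hq1 : 1 ≤ q := by omega
  rcases Nat.lt_or_ge m 4 with hm4 | hm4
  · -- m ∈ {2,3}, n = q^b * m, need b ≥ 2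
    have hmr : m = r := by
      have hrlem : r ≤ m := Nat.le_of_dvd (by omega) hrm
      have h2r := hrp.two_le
      interval_cases m <;> interval_cases r <;> omega
    have hmp : m.Prime := hmr ▸ hrp
    have hmq : m < q := hmr ▸ hrq
    have hb2 : 2 ≤ b := by
      by_contra hcon
      push_neg at hcon
      have hb1' : b = 1 := by omega
      apply h2
      refine ⟨m, q, hmp, hqp, hmq, ?_, ?_⟩
      · interval_cases m
        · exact Or.inl rfl
        · exact Or.inr rfl
      · rw [← hQm, hb1', pow_one, mul_comm]
    have hq2n : q ^ 2 ∣ n := (pow_dvd_pow q hb2).trans hQdvd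
    have hmqn : m * q ∣ n := by
      rw [← hQm, mul_comm (q ^ b) m]
      exact mul_dvd_mul_left m (dvd_pow_self q (by omega))
    have hqpos : 0 < q := by omega
    refine ⟨q ^ 2, q ^ 2, m, m * q, dvd_rfl, hq2n, dvd_mul_right m q, hmqn, ?_, ?_, ?_⟩
    · have c1 : ¬ q ^ 2 ∣ m ∧ ¬ m ∣ q ^ 2 := by
        constructor
        · intro h
          exact hqnm ((dvd_pow_self q two_ne_zero).trans h)
        · intro h
          have := (Nat.prime_dvd_prime_iff_eq hmp hqp).mp (hmp.dvd_of_dvd_pow h)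
          omega
      have c2 : ¬ q ^ 2 ∣ m * q ∧ ¬ m * q ∣ q ^ 2 := by
        constructor
        · intro h
          rw [pow_two] at h
          exact hqnm ((Nat.mul_dvd_mul_iff_right hqpos).mp h)
        · intro h
          rw [pow_two] at h
          have hmdq : m ∣ q := (Nat.mul_dvd_mul_iff_right hqpos).mp h
          have := (Nat.prime_dvd_prime_iff_eq hmp hqp).mp hmdq
          omega
      rintro x y (rfl | rfl) (rfl | rfl)
      · exact c1
      · exact c2
      · exact c1
      · exact c2
    · left
      refine ⟨rfl, ?_⟩
      rw [Nat.totient_prime_pow hqp (by omega : 0 < 2)]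
      have h21 : (2:ℕ) - 1 = 1 := rfl
      rw [h21, pow_one]
      have h2q : 2 ≤ q - 1 := by omega
      calc (3:ℕ) ≤ 3 * 2 := by norm_num
        _ ≤ q * (q - 1) := Nat.mul_le_mul hq3 h2q
    · right
      constructor
      · intro h
        have : m * 1 = m * q := by rw [mul_one]; exact h
        have := Nat.eq_of_mul_eq_mul_left (by omega : 0 < m) this
        omega
      · have hco : m.Coprime q := (Nat.coprime_primes hmp hqp).mpr (by omega)
        rw [Nat.totient_mul hco]
        have htm : 1 ≤ m.totient := Nat.totient_pos.mpr (by omega)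
        have htq : 2 ≤ q.totient := by rw [Nat.totient_prime hqp]; omega
        calc 2 ≤ q.totient := htq
          _ = 1 * q.totient := (one_mul _).symm
          _ ≤ m.totient * q.totient := Nat.mul_le_mul_right _ htm
  rcases Nat.lt_or_ge (q ^ b) 4 with hQ4 | hQ4
  · -- q = 3, b = 1, m = 2^a with a ≥ 3
    have hqle : q ≤ q ^ b := Nat.le_self_pow (by omega) q
    have hq33 : q = 3 := by omega
    have hb1' : b = 1 := by
      by_contra hcon
      have hb2 : 2 ≤ b := by omega
      have : q ^ 2 ≤ q ^ b := Nat.pow_le_pow_right (by omega) hb2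
      have : 9 ≤ q ^ b := by nlinarith
      omega
    have hm2pow : ∀ s : ℕ, s.Prime → s ∣ m → s = 2 := by
      intro s hs hsm
      have hsn : s ∣ n := hsm.trans hmn
      have hsq : s ≤ q := hqmax s (Nat.mem_primeFactors.mpr ⟨hs, hsn, hn⟩)
      have hs3 : s ≠ 3 := by
        rintro rfl
        exact hqnm (hq33 ▸ hsm)
      have := hs.two_le
      omega
    have hmpow : m = 2 ^ m.primeFactorsList.length :=
      Nat.eq_prime_pow_of_unique_prime_dvd hm0 (fun hq hd => hm2pow _ hq hd)
    set a := m.primeFactorsList.length with hadef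
    have ha2 : 2 ≤ a := by
      by_contra hcon
      push_neg at hcon
      have : (2:ℕ) ^ a ≤ 2 ^ 1 := Nat.pow_le_pow_right (by omega) (by omega)
      rw [← hmpow] at this
      omega
    have ha3 : 3 ≤ a := by
      rcases Nat.lt_or_ge a 3 with h | h
      · exfalso
        have ha2' : a = 2 := by omega
        apply h3
        rw [← hQm, hq33, hb1', pow_one, hmpow, ha2']
        norm_num
      · exact h
    have h8 : 8 ∣ n := by
      have h1 : (2:ℕ) ^ 3 ∣ 2 ^ a := pow_dvd_pow 2 ha3
      rw [← hmpow] at h1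
      exact (by norm_num : (8:ℕ) = 2 ^ 3) ▸ h1.trans hmn
    have h6 : 6 ∣ n := by
      have h2m : 2 ∣ m := by
        rw [hmpow]
        exact dvd_pow_self 2 (by omega)
      rw [← hQm, hq33, hb1', pow_one]
      exact (by norm_num : (6:ℕ) = 3 * 2) ▸ mul_dvd_mul_left 3 h2m
    refine ⟨8, 8, 3, 6, dvd_rfl, h8, by norm_num, h6, ?_,
      Or.inl ⟨rfl, by decide⟩, Or.inr ⟨by norm_num, by decide⟩⟩
    rintro x y (rfl | rfl) (rfl | rfl) <;> exact ⟨by decide, by decide⟩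
  · -- main case : q ^ b ≥ 4, m ≥ 4
    obtain ⟨dA, hdAq, hdAq2, hdAn, hdAtot⟩ :
        ∃ dA : ℕ, q ∣ dA ∧ dA ∣ q ^ 2 ∧ dA ∣ n ∧ 3 ≤ dA.totient := by
      rcases Nat.lt_or_ge q 4 with hq4 | hq5
      · have hq33 : q = 3 := by omega
        have hb2 : 2 ≤ b := by
          by_contra hcon
          push_neg at hcon
          have hb1'' : b = 1 := by omega
          rw [hb1'', pow_one] at hQ4
          omega
        refine ⟨q ^ 2, dvd_pow_self q two_ne_zero, dvd_rfl,
          (pow_dvd_pow q hb2).trans hQdvd, ?_⟩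
        rw [hq33]
        decide
      · refine ⟨q, dvd_rfl, dvd_pow_self q two_ne_zero, hqn, ?_⟩
        rw [Nat.totient_prime hqp]
        omega
    have hcross : ∀ e' : ℕ, e' ∣ m → 2 ≤ e' → ¬ dA ∣ e' ∧ ¬ e' ∣ dA := by
      intro e' hem he2'
      constructor
      · intro h
        exact hqnm (hdAq.trans (h.trans hem))
      · intro h
        obtain ⟨i, hi, rfl⟩ := (Nat.dvd_prime_pow hqp).mp (h.trans hdAq2)
        have hi1 : 1 ≤ i := by
          rcases Nat.eq_zero_or_pos i with rfl | h'
          · norm_num at he2'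
          · exact h'
        exact hqnm ((dvd_pow_self q (by omega)).trans hem)
    by_cases hmp : m.Prime
    · refine ⟨dA, dA, m, m, dvd_rfl, hdAn, dvd_rfl, hmn, ?_,
        Or.inl ⟨rfl, hdAtot⟩, Or.inl ⟨rfl, ?_⟩⟩
      · rintro x y (rfl | rfl) (rfl | rfl) <;>
          exact (hcross m dvd_rfl (by omega)).imp id id
      · rw [Nat.totient_prime hmp]
        omega
    · have hmf : m.minFac ∣ m := Nat.minFac_dvd m
      have hmfp : m.minFac.Prime := Nat.minFac_prime (by omega)
      have hmfne : m.minFac ≠ m := by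
        intro h
        exact hmp (h ▸ hmfp)
      refine ⟨dA, dA, m.minFac, m, dvd_rfl, hdAn, hmf,
        hmn, ?_, Or.inl ⟨rfl, hdAtot⟩, Or.inr ⟨hmfne, ?_⟩⟩
      · rintro x y (rfl | rfl) (rfl | rfl)
        · exact hcross m.minFac hmf hmfp.two_le
        · exact hcross m dvd_rfl (by omega)
        · exact hcross m.minFac hmf hmfp.two_le
        · exact hcross m dvd_rfl (by omega)
      · have hev := Nat.totient_even (show 2 < m by omega)
        have hpos := Nat.totient_pos.mpr (show 0 < m by omega)
        obtain ⟨k, hk⟩ := hev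
        omega

end Arith
/-- Characterization of cyclic separability of power graphs of cyclic groups. -/
theorem stmt8 (n : ℕ) [NeZero n] :
    CyclicallySeparable (powerGraph (Multiplicative (ZMod n))) ↔
      (2 ≤ n.primeFactors.card ∧
       (¬ ∃ p q : ℕ, p.Prime ∧ q.Prime ∧ p < q ∧ (p = 2 ∨ p = 3) ∧ n = p * q) ∧
       n ≠ 12) := by
  have hcard : Fintype.card (Multiplicative (ZMod n)) = n := by
    rw [Fintype.card_multiplicative, ZMod.card]
  constructor
  · intro h
    have h' := forward_necessary h
    rw [hcard] at h'
    exact h'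
  · rintro ⟨h1, h2, h3⟩
    obtain ⟨d1, d2, e1, e2, hd12, hd2n, he12, he2n, hcross, hdsup, hesup⟩ :=
      key_arith (NeZero.ne n) h1 h2 h3
    exact construct_separable hd12 (by rw [hcard]; exact hd2n) he12
      (by rw [hcard]; exact he2n) hcross hdsup hesup
end
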